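/- Let A be an N×N primitive nonnegative matrix with Perron–Frobenius eigenvalue λ, and fix a state k. Define the vector y by y_i = 1_{{i = k}} + Σ_{n=1}^{∞} λ^{−n} Σ_{i_1,…,i_{n−1} ≠ k} A(k,i_1)A(i_1,i_2)⋯A(i_{n−1},i)·1_{{i ≠ k}}, where the inner sum ranges over all (n−1)-tuples of states all different from k (for n = 1 the term is λ^{−1}A(k,i)·1_{{i≠k}}). Then all these series converge, y is nonnegative with y_k = 1, and y is a left eigenvector of A for the eigenvalue λ: for every j, Σ_{i=1}^{N} y_i A(i,j) = λ y_j. -/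

import Mathlib

/-- `pathSumAvoiding A k n j = ∑_{i₁,…,iₙ ≠ k} A k i₁ * A i₁ i₂ * ⋯ * A iₙ j`,
the sum over all `n`-tuples of states different from `k` of the products of
the entries of `A` along the path `k, i₁, …, iₙ, j`.  For `n = 0` it is `A k j`. -/
def pathSumAvoiding {N : ℕ} (A : Matrix (Fin N) (Fin N) ℝ) (k : Fin N) :
    ℕ → Fin N → ℝ
  | 0 => fun j => A k j
  | n + 1 => fun j => ∑ i, if i = k then 0 else pathSumAvoiding A k n i * A i j

namespace PerronAux

variable {N : ℕ}

def Qm (A : Matrix (Fin N) (Fin N) ℝ) (k : Fin N) : ℕ → Fin N → Fin N → ℝ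
  | 0 => fun i j => A i j
  | n + 1 => fun i j => ∑ l, if l = k then 0 else Qm A k n i l * A l j

lemma pathSum_eq_Qm (A : Matrix (Fin N) (Fin N) ℝ) (k : Fin N) :
    ∀ n j, pathSumAvoiding A k n j = Qm A k n k j
  | 0, j => rfl
  | n + 1, j => by
      show (∑ i, if i = k then 0 else pathSumAvoiding A k n i * A i j) = _
      simp only [Qm]
      exact Finset.sum_congr rfl fun i _ => by rw [pathSum_eq_Qm A k n i]

lemma Qm_nonneg {A : Matrix (Fin N) (Fin N) ℝ} {k : Fin N} (hA : ∀ i j, 0 ≤ A i j) :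
    ∀ n i j, 0 ≤ Qm A k n i j
  | 0, i, j => hA i j
  | n+1, i, j => Finset.sum_nonneg fun l _ => by
      by_cases hl : l = k
      · simp [hl]
      · rw [if_neg hl]
        exact mul_nonneg (Qm_nonneg hA n i l) (hA l j)

lemma pow_entry_nonneg {A : Matrix (Fin N) (Fin N) ℝ} (hA : ∀ i j, 0 ≤ A i j) :
    ∀ p i j, 0 ≤ (A ^ p) i j
  | 0, i, j => by
      rw [pow_zero]
      by_cases h : i = j <;> simp [Matrix.one_apply, h]
  | p+1, i, j => by
      rw [pow_succ, Matrix.mul_apply]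
      exact Finset.sum_nonneg fun l _ => mul_nonneg (pow_entry_nonneg hA p i l) (hA l j)

lemma Qm_le_pow {A : Matrix (Fin N) (Fin N) ℝ} {k : Fin N} (hA : ∀ i j, 0 ≤ A i j) :
    ∀ n i j, Qm A k n i j ≤ (A ^ (n+1)) i j
  | 0, i, j => by rw [pow_one]; exact le_refl _
  | n+1, i, j => by
      rw [pow_succ, Matrix.mul_apply]
      refine Finset.sum_le_sum fun l _ => ?_
      by_cases hl : l = k
      · rw [if_pos hl]
        exact mul_nonneg (pow_entry_nonneg hA (n+1) i l) (hA l j)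
      · rw [if_neg hl]
        exact mul_le_mul_of_nonneg_right (Qm_le_pow hA n i l) (hA l j)

lemma Qm_succ (A : Matrix (Fin N) (Fin N) ℝ) (k : Fin N) (n : ℕ) (i j : Fin N) :
    Qm A k (n+1) i j = ∑ l, if l = k then 0 else Qm A k n i l * A l j := rfl

lemma Qm_split (A : Matrix (Fin N) (Fin N) ℝ) (k : Fin N) :
    ∀ (q p : ℕ) (i j : Fin N), Qm A k (p + q + 1) i j =
      ∑ l, if l = k then 0 else Qm A k p i l * Qm A k q l j
  | 0, p, i, j => rfl
  | q+1, p, i, j => by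
      show Qm A k ((p + q + 1) + 1) i j = _
      rw [Qm_succ]
      have : ∀ l : Fin N, (if l = k then (0:ℝ) else Qm A k (p+q+1) i l * A l j)
          = ∑ l', if l' = k then 0 else if l = k then 0 else
              Qm A k p i l' * Qm A k q l' l * A l j := by
        intro l
        by_cases hl : l = k
        · simp [hl]
        · rw [if_neg hl, Qm_split A k q p i l, Finset.sum_mul]
          refine Finset.sum_congr rfl fun l' _ => ?_
          by_cases hl' : l' = k <;> simp [hl', hl]
      rw [Finset.sum_congr rfl fun l _ => this l, Finset.sum_comm]
      refine Finset.sum_congr rfl fun l' _ => ?_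
      by_cases hl' : l' = k
      · simp [hl']
      · simp only [hl', if_false, Qm_succ, Finset.mul_sum]
        refine Finset.sum_congr rfl fun l _ => ?_
        by_cases hl : l = k <;> simp [hl, mul_assoc]

lemma sum_ite_ne (k : Fin N) (f : Fin N → ℝ) :
    ∑ i, (if i = k then 0 else f i) = (∑ i, f i) - f k := by
  have h : ∀ i, (if i = k then (0:ℝ) else f i) = f i - (if i = k then f i else 0) := by
    intro i; by_cases h : i = k <;> simp [h]
  rw [Finset.sum_congr rfl fun i _ => h i, Finset.sum_sub_distrib,
    Finset.sum_ite_eq' Finset.univ k f]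
  simp

lemma summable_pow_div {θ : ℝ} (h0 : 0 ≤ θ) (h1 : θ < 1) {p : ℕ} (hp : 0 < p) :
    Summable (fun n : ℕ => θ ^ (n / p)) := by
  haveI : NeZero p := ⟨hp.ne'⟩
  have h1s : Summable (fun n : ℕ => θ ^ n) := summable_geometric_of_lt_one h0 h1
  have h2s : Summable (fun _ : Fin p => (1:ℝ)) := Summable.of_finite
  have hs : Summable (fun x : ℕ × Fin p => θ ^ x.1 * 1) :=
    h1s.mul_of_nonneg h2s (fun n => pow_nonneg h0 n) (fun _ => zero_le_one)
  have heq : (fun n : ℕ => θ ^ (n / p)) =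
      (fun x : ℕ × Fin p => θ ^ x.1 * 1) ∘ (Nat.divModEquiv p) := by
    funext n
    show θ ^ (n / p) = θ ^ (n / p) * 1
    rw [mul_one]
  rw [heq]
  exact ((Nat.divModEquiv p).summable_iff (f := fun x : ℕ × Fin p => θ ^ x.1 * 1)).2 hs

end PerronAux


/-- Let `A` be a primitive nonnegative matrix with Perron–Frobenius eigenvalue
`lam` and fix a state `k`.  Define
`y i = 1_{i=k} + ∑_{n≥1} lam⁻ⁿ ∑_{i₁,…,i_{n−1} ≠ k} A(k,i₁)⋯A(i_{n−1},i) 1_{i≠k}`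
(the term of index `n : ℕ` of the formal series below corresponds to the term
of index `n + 1` above).  Then all the series converge, `y` is nonnegative,
`y k = 1`, and `y` is a left eigenvector of `A` for the eigenvalue `lam`. -/
theorem pathSum_vector_is_left_eigenvector
    {N : ℕ} (A : Matrix (Fin N) (Fin N) ℝ)
    (hA_nonneg : ∀ i j, 0 ≤ A i j)
    (hA_prim : ∃ m : ℕ, 0 < m ∧ ∀ i j, 0 < (A ^ m) i j)
    (lam : ℝ) (u : Fin N → ℝ)
    (hlam_pos : 0 < lam)
    (hu_pos : ∀ i, 0 < u i)
    (hu_sum : ∑ i, u i = 1)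
    (hu_eig : ∀ j, ∑ i, u i * A i j = lam * u j)
    (k : Fin N)
    (y : Fin N → ℝ)
    (hy : ∀ i, y i = (if i = k then 1 else 0) +
      ∑' n : ℕ, (if i = k then (0 : ℝ) else
        lam⁻¹ ^ (n + 1) * pathSumAvoiding A k n i)) :
    (∀ i, Summable (fun n : ℕ => if i = k then (0 : ℝ) else
        lam⁻¹ ^ (n + 1) * pathSumAvoiding A k n i)) ∧
    (∀ i, 0 ≤ y i) ∧
    y k = 1 ∧
    (∀ j, ∑ i, y i * A i j = lam * y j) := by
  classical
  open PerronAux in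
  obtain ⟨m₀, hm₀, hAm₀⟩ := hA_prim
  obtain ⟨m, rfl⟩ : ∃ m', m₀ = m' + 1 := ⟨m₀ - 1, by omega⟩
  have hlam_ne : lam ≠ 0 := ne_of_gt hlam_pos
  have hinv_pos : 0 < lam⁻¹ := inv_pos.2 hlam_pos
  have hinv_nonneg : (0:ℝ) ≤ lam⁻¹ := le_of_lt hinv_pos
  have huk : 0 < u k := hu_pos k
  haveI : Nonempty (Fin N) := ⟨k⟩
  set T : ℕ → Fin N → ℝ := fun n j => lam⁻¹ ^ (n+1) * Qm A k n k j with hTdef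
  have hT_nonneg : ∀ n j, 0 ≤ T n j := fun n j =>
    mul_nonneg (pow_nonneg hinv_nonneg _) (Qm_nonneg hA_nonneg n k j)
  -- u is a left eigenvector of every power
  have hu_pow : ∀ p j, ∑ i, u i * (A ^ p) i j = lam ^ p * u j := by
    intro p
    induction p with
    | zero =>
      intro j
      simp [Matrix.one_apply, mul_ite, Finset.sum_ite_eq']
    | succ p ih =>
      intro j
      simp only [pow_succ, Matrix.mul_apply, Finset.mul_sum]
      rw [Finset.sum_comm]
      have h1 : ∀ l, (∑ i, u i * ((A ^ p) i l * A l j)) = lam ^ p * u l * A l j := by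
        intro l
        have e1 : ∑ i, u i * ((A ^ p) i l * A l j) = (∑ i, u i * (A ^ p) i l) * A l j := by
          rw [Finset.sum_mul]
          exact Finset.sum_congr rfl fun i _ => (mul_assoc _ _ _).symm
        rw [e1, ih l]
      rw [Finset.sum_congr rfl fun l _ => h1 l]
      have e2 : ∑ l, lam ^ p * u l * A l j = lam ^ p * ∑ l, u l * A l j := by
        rw [Finset.mul_sum]
        exact Finset.sum_congr rfl fun l _ => mul_assoc _ _ _
      rw [e2, hu_eig j]
      ring
  -- δ and θ
  set δ : ℝ := Finset.univ.inf' Finset.univ_nonempty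
      (fun j => u k * (A ^ (m+1)) k j / (lam ^ (m+1) * u j)) with hδdef
  have hlamM : 0 < lam ^ (m+1) := pow_pos hlam_pos _
  have hδ_pos : 0 < δ := by
    rw [hδdef, Finset.lt_inf'_iff]
    intro j _
    exact div_pos (mul_pos huk (hAm₀ k j)) (mul_pos hlamM (hu_pos j))
  have hδ_le : ∀ j, δ * (lam ^ (m+1) * u j) ≤ u k * (A ^ (m+1)) k j := by
    intro j
    have h := Finset.inf'_le (fun j => u k * (A ^ (m+1)) k j / (lam ^ (m+1) * u j))
      (Finset.mem_univ j)
    calc δ * (lam ^ (m+1) * u j)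
        ≤ (u k * (A ^ (m+1)) k j / (lam ^ (m+1) * u j)) * (lam ^ (m+1) * u j) :=
          mul_le_mul_of_nonneg_right h (le_of_lt (mul_pos hlamM (hu_pos j)))
      _ = u k * (A ^ (m+1)) k j := div_mul_cancel₀ _ (ne_of_gt (mul_pos hlamM (hu_pos j)))
  have hδ_le_one : δ ≤ 1 := by
    have h := Finset.inf'_le (fun j => u k * (A ^ (m+1)) k j / (lam ^ (m+1) * u j))
      (Finset.mem_univ k)
    have hkk : u k * (A ^ (m+1)) k k ≤ lam ^ (m+1) * u k := by
      calc u k * (A ^ (m+1)) k k ≤ ∑ i, u i * (A ^ (m+1)) i k :=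
            Finset.single_le_sum (fun i _ => mul_nonneg (hu_pos i).le
              (pow_entry_nonneg hA_nonneg (m+1) i k)) (Finset.mem_univ k)
        _ = lam ^ (m+1) * u k := hu_pow (m+1) k
    exact h.trans ((div_le_one (mul_pos hlamM huk)).2 hkk)
  set θ : ℝ := 1 - δ with hθdef
  have hθ0 : 0 ≤ θ := by rw [hθdef]; linarith
  have hθ1 : θ < 1 := by rw [hθdef]; linarith
  -- the kernel estimate
  have hkernel : ∀ j, (∑ i, if i = k then 0 else u i * Qm A k (m + m + 1) i j)
      ≤ lam ^ (m+m+2) * (θ * u j) := by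
    intro j
    have h1 : (∑ i, if i = k then 0 else u i * Qm A k (m+m+1) i j)
        ≤ ∑ i, u i * ∑ l, (if l = k then 0 else (A ^ (m+1)) i l * (A ^ (m+1)) l j) := by
      refine Finset.sum_le_sum fun i _ => ?_
      by_cases hi : i = k
      · rw [if_pos hi]
        refine mul_nonneg (hu_pos i).le (Finset.sum_nonneg fun l _ => ?_)
        by_cases hl : l = k
        · simp [hl]
        · rw [if_neg hl]
          exact mul_nonneg (pow_entry_nonneg hA_nonneg _ _ _) (pow_entry_nonneg hA_nonneg _ _ _)
      · rw [if_neg hi, Qm_split A k m m i j]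
        refine mul_le_mul_of_nonneg_left (Finset.sum_le_sum fun l _ => ?_) (hu_pos i).le
        by_cases hl : l = k
        · simp [hl]
        · rw [if_neg hl, if_neg hl]
          exact mul_le_mul (Qm_le_pow hA_nonneg m i l) (Qm_le_pow hA_nonneg m l j)
            (Qm_nonneg hA_nonneg m l j) (pow_entry_nonneg hA_nonneg (m+1) i l)
    have h2 : (∑ i, u i * ∑ l, (if l = k then 0 else (A ^ (m+1)) i l * (A ^ (m+1)) l j))
        = ∑ l, (if l = k then 0 else (lam ^ (m+1) * u l) * (A ^ (m+1)) l j) := by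
      simp_rw [Finset.mul_sum]
      rw [Finset.sum_comm]
      refine Finset.sum_congr rfl fun l _ => ?_
      by_cases hl : l = k
      · simp [hl]
      · simp only [hl, if_false]
        have e1 : ∑ i, u i * ((A ^ (m+1)) i l * (A ^ (m+1)) l j)
            = (∑ i, u i * (A ^ (m+1)) i l) * (A ^ (m+1)) l j := by
          rw [Finset.sum_mul]
          exact Finset.sum_congr rfl fun i _ => (mul_assoc _ _ _).symm
        rw [e1, hu_pow (m+1) l]
    have h3 : (∑ l, if l = k then 0 else (lam ^ (m+1) * u l) * (A ^ (m+1)) l j)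
        = lam ^ (m+1) * (lam ^ (m+1) * u j) - lam ^ (m+1) * (u k * (A ^ (m+1)) k j) := by
      rw [sum_ite_ne k (fun l => (lam ^ (m+1) * u l) * (A ^ (m+1)) l j)]
      have e1 : ∑ l, (lam ^ (m+1) * u l) * (A ^ (m+1)) l j
          = lam ^ (m+1) * (lam ^ (m+1) * u j) := by
        have e2 : ∑ l, (lam ^ (m+1) * u l) * (A ^ (m+1)) l j
            = lam ^ (m+1) * ∑ l, u l * (A ^ (m+1)) l j := by
          rw [Finset.mul_sum]
          exact Finset.sum_congr rfl fun l _ => by ring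
        rw [e2, hu_pow (m+1) j]
      rw [e1]
      ring
    have h4 : lam ^ (m+1) * (lam ^ (m+1) * u j) - lam ^ (m+1) * (u k * (A ^ (m+1)) k j)
        ≤ lam ^ (m+m+2) * (θ * u j) := by
      have h5 : lam ^ (m+1) * (δ * (lam ^ (m+1) * u j)) ≤ lam ^ (m+1) * (u k * (A ^ (m+1)) k j) :=
        mul_le_mul_of_nonneg_left (hδ_le j) hlamM.le
      have h6 : lam ^ (m+m+2) * (θ * u j)
          = lam ^ (m+1) * (lam ^ (m+1) * u j) - lam ^ (m+1) * (δ * (lam ^ (m+1) * u j)) := by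
        rw [hθdef, show m+m+2 = (m+1)+(m+1) from by omega, pow_add]
        ring
      linarith
    exact ((h1.trans_eq h2).trans_eq h3).trans h4
  -- base bound for T
  have hT_base : ∀ n j, T n j ≤ (u k)⁻¹ * u j := by
    intro n
    induction n with
    | zero =>
      intro j
      have h : u k * A k j ≤ lam * u j := by
        calc u k * A k j ≤ ∑ i, u i * A i j :=
              Finset.single_le_sum (fun i _ => mul_nonneg (hu_pos i).le (hA_nonneg i j))
                (Finset.mem_univ k)
          _ = lam * u j := hu_eig j
      show lam⁻¹ ^ (0+1) * Qm A k 0 k j ≤ (u k)⁻¹ * u j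
      rw [pow_one]
      have e : lam⁻¹ * Qm A k 0 k j = A k j / lam := by
        rw [inv_mul_eq_div]; rfl
      rw [e, inv_mul_eq_div, div_le_div_iff₀ hlam_pos huk]
      nlinarith [h]
    | succ n ih =>
      intro j
      have hc : ∀ i, Qm A k n k i ≤ lam ^ (n+1) * ((u k)⁻¹ * u i) := by
        intro i
        calc Qm A k n k i = lam ^ (n+1) * (lam⁻¹ ^ (n+1) * Qm A k n k i) := by
              rw [← mul_assoc, ← mul_pow, mul_inv_cancel₀ hlam_ne, one_pow, one_mul]
          _ ≤ lam ^ (n+1) * ((u k)⁻¹ * u i) :=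
              mul_le_mul_of_nonneg_left (ih i) (pow_nonneg hlam_pos.le _)
      have hsum : (∑ i, if i = k then 0 else Qm A k n k i * A i j)
          ≤ lam ^ (n+1) * ((u k)⁻¹ * (lam * u j)) := by
        calc (∑ i, if i = k then 0 else Qm A k n k i * A i j)
            ≤ ∑ i, lam ^ (n+1) * (u k)⁻¹ * (u i * A i j) := by
              refine Finset.sum_le_sum fun i _ => ?_
              by_cases hi : i = k
              · rw [if_pos hi]
                exact mul_nonneg (mul_nonneg (pow_nonneg hlam_pos.le _) (inv_nonneg.2 huk.le))
                  (mul_nonneg (hu_pos i).le (hA_nonneg i j))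
              · rw [if_neg hi]
                calc Qm A k n k i * A i j ≤ (lam ^ (n+1) * ((u k)⁻¹ * u i)) * A i j :=
                      mul_le_mul_of_nonneg_right (hc i) (hA_nonneg i j)
                  _ = lam ^ (n+1) * (u k)⁻¹ * (u i * A i j) := by ring
          _ = lam ^ (n+1) * (u k)⁻¹ * (lam * u j) := by
              rw [← Finset.mul_sum, hu_eig j]
          _ = lam ^ (n+1) * ((u k)⁻¹ * (lam * u j)) := by ring
      show lam⁻¹ ^ (n+1+1) * Qm A k (n+1) k j ≤ (u k)⁻¹ * u j
      rw [Qm_succ]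
      calc lam⁻¹ ^ (n+1+1) * (∑ l, if l = k then 0 else Qm A k n k l * A l j)
          ≤ lam⁻¹ ^ (n+1+1) * (lam ^ (n+1) * ((u k)⁻¹ * (lam * u j))) :=
            mul_le_mul_of_nonneg_left hsum (pow_nonneg hinv_nonneg _)
        _ = (lam⁻¹ ^ (n+2) * lam ^ (n+2)) * ((u k)⁻¹ * u j) := by ring
        _ = (u k)⁻¹ * u j := by
            rw [← mul_pow, inv_mul_cancel₀ hlam_ne, one_pow, one_mul]
  -- contraction for T
  have hT_contr : ∀ (C : ℝ), 0 ≤ C → ∀ n, (∀ i, T n i ≤ C * u i) →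
      ∀ j, T (n + (m+m+2)) j ≤ θ * C * u j := by
    intro C hC n hn j
    have hsp : Qm A k (n + (m+m+2)) k j
        = ∑ l, if l = k then 0 else Qm A k n k l * Qm A k (m+m+1) l j := by
      have h := Qm_split A k (m+m+1) n k j
      rw [show n + (m+m+2) = n + (m+m+1) + 1 from by omega]
      exact h
    have hbound : (∑ l, if l = k then 0 else Qm A k n k l * Qm A k (m+m+1) l j)
        ≤ lam ^ (n+1) * C * (∑ l, if l = k then 0 else u l * Qm A k (m+m+1) l j) := by
      rw [Finset.mul_sum]
      refine Finset.sum_le_sum fun l _ => ?_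
      by_cases hl : l = k
      · simp [hl]
      · rw [if_neg hl, if_neg hl]
        have hQ : Qm A k n k l ≤ lam ^ (n+1) * (C * u l) := by
          calc Qm A k n k l = lam ^ (n+1) * (lam⁻¹ ^ (n+1) * Qm A k n k l) := by
                rw [← mul_assoc, ← mul_pow, mul_inv_cancel₀ hlam_ne, one_pow, one_mul]
            _ ≤ lam ^ (n+1) * (C * u l) :=
                mul_le_mul_of_nonneg_left (hn l) (pow_nonneg hlam_pos.le _)
        calc Qm A k n k l * Qm A k (m+m+1) l j
            ≤ (lam ^ (n+1) * (C * u l)) * Qm A k (m+m+1) l j :=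
              mul_le_mul_of_nonneg_right hQ (Qm_nonneg hA_nonneg _ _ _)
          _ = lam ^ (n+1) * C * (u l * Qm A k (m+m+1) l j) := by ring
    have hker : (∑ l, if l = k then 0 else u l * Qm A k (m+m+1) l j)
        ≤ lam ^ (m+m+2) * (θ * u j) := hkernel j
    calc T (n + (m+m+2)) j
        = lam⁻¹ ^ (n + (m+m+2) + 1) * Qm A k (n + (m+m+2)) k j := rfl
      _ = lam⁻¹ ^ (n + (m+m+2) + 1)
            * (∑ l, if l = k then 0 else Qm A k n k l * Qm A k (m+m+1) l j) := by rw [hsp]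
      _ ≤ lam⁻¹ ^ (n + (m+m+2) + 1)
            * (lam ^ (n+1) * C * (lam ^ (m+m+2) * (θ * u j))) := by
          refine mul_le_mul_of_nonneg_left ?_ (pow_nonneg hinv_nonneg _)
          exact hbound.trans (mul_le_mul_of_nonneg_left hker
            (mul_nonneg (pow_nonneg hlam_pos.le _) hC))
      _ = (lam⁻¹ ^ (n + (m+m+2) + 1) * lam ^ (n + (m+m+2) + 1)) * (θ * C * u j) := by
          rw [show n + (m+m+2) + 1 = (n+1) + (m+m+2) from by omega, pow_add, pow_add]
          ring
      _ = θ * C * u j := by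
          rw [← mul_pow, inv_mul_cancel₀ hlam_ne, one_pow, one_mul]
  -- geometric decay of T
  have hT_geom : ∀ n j, T n j ≤ ((u k)⁻¹ * θ ^ (n / (m+m+2))) * u j := by
    intro n
    induction n using Nat.strong_induction_on with
    | _ n ih =>
      by_cases hn : n < m+m+2
      · intro j
        rw [Nat.div_eq_of_lt hn, pow_zero, mul_one]
        exact hT_base n j
      · push_neg at hn
        obtain ⟨n', rfl⟩ : ∃ n', n = n' + (m+m+2) := ⟨n - (m+m+2), by omega⟩
        intro j
        have hih : ∀ i, T n' i ≤ ((u k)⁻¹ * θ ^ (n' / (m+m+2))) * u i :=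
          ih n' (by omega)
        have hC : 0 ≤ (u k)⁻¹ * θ ^ (n' / (m+m+2)) :=
          mul_nonneg (inv_nonneg.2 huk.le) (pow_nonneg hθ0 _)
        calc T (n' + (m+m+2)) j ≤ θ * ((u k)⁻¹ * θ ^ (n' / (m+m+2))) * u j :=
              hT_contr _ hC n' hih j
          _ = ((u k)⁻¹ * θ ^ (n' / (m+m+2) + 1)) * u j := by ring
          _ = ((u k)⁻¹ * θ ^ ((n' + (m+m+2)) / (m+m+2))) * u j := by
              rw [Nat.add_div_right n' (by omega)]
  have hTsum : ∀ j, Summable (fun n => T n j) := by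
    intro j
    refine Summable.of_nonneg_of_le (fun n => hT_nonneg n j) (fun n => ?_)
      ((summable_pow_div hθ0 hθ1 (p := m+m+2) (by omega)).mul_left ((u k)⁻¹ * u j))
    calc T n j ≤ ((u k)⁻¹ * θ ^ (n / (m+m+2))) * u j := hT_geom n j
      _ = (u k)⁻¹ * u j * θ ^ (n / (m+m+2)) := by ring
  -- the escape mass E
  set E : ℕ → ℝ := fun n => lam⁻¹ ^ (n+1) * ∑ i, (if i = k then 0 else u i * Qm A k n i k)
    with hEdef
  have hE_nonneg : ∀ n, 0 ≤ E n := by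
    intro n
    refine mul_nonneg (pow_nonneg hinv_nonneg _) (Finset.sum_nonneg fun i _ => ?_)
    by_cases hi : i = k
    · simp [hi]
    · rw [if_neg hi]
      exact mul_nonneg (hu_pos i).le (Qm_nonneg hA_nonneg n i k)
  have hpeel : ∀ (n : ℕ) (i : Fin N), Qm A k (n+1) i k
      = ∑ l, if l = k then 0 else A i l * Qm A k n l k := by
    intro n i
    have h := Qm_split A k n 0 i k
    rw [show n + 1 = 0 + n + 1 from by omega]
    exact h
  have hE_rec : ∀ n, E (n+1) = E n - u k * T (n+1) k := by
    intro n
    have h1 : (∑ i, if i = k then 0 else u i * Qm A k (n+1) i k)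
        = lam * (∑ l, if l = k then 0 else u l * Qm A k n l k)
          - u k * Qm A k (n+1) k k := by
      calc (∑ i, if i = k then 0 else u i * Qm A k (n+1) i k)
          = ∑ i, ∑ l, (if l = k then 0 else (if i = k then 0 else u i * (A i l * Qm A k n l k))) := by
            refine Finset.sum_congr rfl fun i _ => ?_
            by_cases hi : i = k
            · simp [hi]
            · rw [if_neg hi, hpeel n i, Finset.mul_sum]
              refine Finset.sum_congr rfl fun l _ => ?_
              by_cases hl : l = k <;> simp [hl, hi]
        _ = ∑ l, (if l = k then 0 else ((∑ i, u i * A i l) - u k * A k l) * Qm A k n l k) := by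
            rw [Finset.sum_comm]
            refine Finset.sum_congr rfl fun l _ => ?_
            by_cases hl : l = k
            · simp [hl]
            · simp only [hl, if_false]
              rw [sum_ite_ne k (fun i => u i * (A i l * Qm A k n l k))]
              have e1 : ∑ i, u i * (A i l * Qm A k n l k)
                  = (∑ i, u i * A i l) * Qm A k n l k := by
                rw [Finset.sum_mul]
                exact Finset.sum_congr rfl fun i _ => (mul_assoc _ _ _).symm
              rw [e1]
              ring
        _ = lam * (∑ l, if l = k then 0 else u l * Qm A k n l k)
              - u k * (∑ l, if l = k then 0 else A k l * Qm A k n l k) := by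
            rw [Finset.mul_sum, Finset.mul_sum, ← Finset.sum_sub_distrib]
            refine Finset.sum_congr rfl fun l _ => ?_
            by_cases hl : l = k
            · simp [hl]
            · simp only [hl, if_false]
              rw [hu_eig l]
              ring
        _ = lam * (∑ l, if l = k then 0 else u l * Qm A k n l k)
              - u k * Qm A k (n+1) k k := by
            rw [hpeel n k]
    have e2 : lam⁻¹ ^ (n+2) * lam = lam⁻¹ ^ (n+1) := by
      rw [pow_succ, mul_assoc, inv_mul_cancel₀ hlam_ne, mul_one]
    calc E (n+1) = lam⁻¹ ^ (n+2) * (∑ i, if i = k then 0 else u i * Qm A k (n+1) i k) := rfl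
      _ = lam⁻¹ ^ (n+2) * (lam * (∑ l, if l = k then 0 else u l * Qm A k n l k)
            - u k * Qm A k (n+1) k k) := by rw [h1]
      _ = (lam⁻¹ ^ (n+2) * lam) * (∑ l, if l = k then 0 else u l * Qm A k n l k)
            - u k * (lam⁻¹ ^ (n+2) * Qm A k (n+1) k k) := by ring
      _ = E n - u k * T (n+1) k := by rw [e2]
  have hE_id : ∀ n, u k * (∑ t ∈ Finset.range (n+1), T t k) + E n = u k := by
    intro n
    induction n with
    | zero =>
      have e0 : E 0 = lam⁻¹ * ((lam * u k) - u k * A k k) := by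
        calc E 0 = lam⁻¹ ^ 1 * ∑ i, (if i = k then 0 else u i * A i k) := rfl
          _ = lam⁻¹ * ((lam * u k) - u k * A k k) := by
              rw [pow_one, sum_ite_ne k (fun i => u i * A i k), hu_eig k]
      have e1 : (∑ t ∈ Finset.range 1, T t k) = lam⁻¹ * A k k := by
        rw [Finset.sum_range_one]
        show lam⁻¹ ^ (0+1) * Qm A k 0 k k = lam⁻¹ * A k k
        rw [pow_one]; rfl
      rw [e0, e1]
      field_simp
      ring
    | succ n ih =>
      rw [Finset.sum_range_succ, hE_rec n]
      ring_nf
      ring_nf at ih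
      linarith [ih]
  have hE_le : ∀ n, E n ≤ u k := by
    intro n
    have h := hE_id n
    have hs : 0 ≤ ∑ t ∈ Finset.range (n+1), T t k :=
      Finset.sum_nonneg fun t _ => hT_nonneg t k
    nlinarith
  have hE_contr : ∀ n, E (n + (m+m+2)) ≤ θ * E n := by
    intro n
    have hsp : ∀ i : Fin N, Qm A k (n + (m+m+2)) i k
        = ∑ l, if l = k then 0 else Qm A k (m+m+1) i l * Qm A k n l k := by
      intro i
      have h := Qm_split A k n (m+m+1) i k
      rw [show n + (m+m+2) = (m+m+1) + n + 1 from by omega]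
      exact h
    have h1 : (∑ i, if i = k then 0 else u i * Qm A k (n+(m+m+2)) i k)
        ≤ lam ^ (m+m+2) * θ * (∑ l, if l = k then 0 else u l * Qm A k n l k) := by
      have h2 : (∑ i, if i = k then 0 else u i * Qm A k (n+(m+m+2)) i k)
          = ∑ l, (if l = k then 0 else
              (∑ i, if i = k then 0 else u i * Qm A k (m+m+1) i l) * Qm A k n l k) := by
        calc (∑ i, if i = k then 0 else u i * Qm A k (n+(m+m+2)) i k)
            = ∑ i, ∑ l, (if l = k then 0 else
                (if i = k then 0 else u i * Qm A k (m+m+1) i l) * Qm A k n l k) := by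
              refine Finset.sum_congr rfl fun i _ => ?_
              by_cases hi : i = k
              · simp [hi]
              · rw [if_neg hi, hsp i, Finset.mul_sum]
                refine Finset.sum_congr rfl fun l _ => ?_
                by_cases hl : l = k <;> simp [hl, hi, mul_assoc]
          _ = _ := by
              rw [Finset.sum_comm]
              refine Finset.sum_congr rfl fun l _ => ?_
              by_cases hl : l = k
              · simp [hl]
              · simp only [hl, if_false]
                rw [← Finset.sum_mul]
      rw [h2, Finset.mul_sum]
      refine Finset.sum_le_sum fun l _ => ?_
      by_cases hl : l = k
      · simp [hl]
      · rw [if_neg hl, if_neg hl]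
        calc (∑ i, if i = k then 0 else u i * Qm A k (m+m+1) i l) * Qm A k n l k
            ≤ (lam ^ (m+m+2) * (θ * u l)) * Qm A k n l k :=
              mul_le_mul_of_nonneg_right (hkernel l) (Qm_nonneg hA_nonneg _ _ _)
          _ = lam ^ (m+m+2) * θ * (u l * Qm A k n l k) := by ring
    calc E (n + (m+m+2))
        = lam⁻¹ ^ (n + (m+m+2) + 1) * (∑ i, if i = k then 0 else u i * Qm A k (n+(m+m+2)) i k) := rfl
      _ ≤ lam⁻¹ ^ (n + (m+m+2) + 1)
            * (lam ^ (m+m+2) * θ * (∑ l, if l = k then 0 else u l * Qm A k n l k)) :=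
          mul_le_mul_of_nonneg_left h1 (pow_nonneg hinv_nonneg _)
      _ = (lam⁻¹ ^ (m+m+2) * lam ^ (m+m+2))
            * (θ * (lam⁻¹ ^ (n+1) * (∑ l, if l = k then 0 else u l * Qm A k n l k))) := by
          rw [show n + (m+m+2) + 1 = (n+1) + (m+m+2) from by omega, pow_add]
          ring
      _ = θ * E n := by
          rw [← mul_pow, inv_mul_cancel₀ hlam_ne, one_pow, one_mul]
  have hE_geom : ∀ n, E n ≤ u k * θ ^ (n / (m+m+2)) := by
    intro n
    induction n using Nat.strong_induction_on with
    | _ n ih =>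
      by_cases hn : n < m+m+2
      · rw [Nat.div_eq_of_lt hn, pow_zero, mul_one]
        exact hE_le n
      · push_neg at hn
        obtain ⟨n', rfl⟩ : ∃ n', n = n' + (m+m+2) := ⟨n - (m+m+2), by omega⟩
        calc E (n' + (m+m+2)) ≤ θ * E n' := hE_contr n'
          _ ≤ θ * (u k * θ ^ (n' / (m+m+2))) :=
              mul_le_mul_of_nonneg_left (ih n' (by omega)) hθ0
          _ = u k * θ ^ (n' / (m+m+2) + 1) := by ring
          _ = u k * θ ^ ((n' + (m+m+2)) / (m+m+2)) := by
              rw [Nat.add_div_right n' (by omega)]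
  have hE_tendsto : Filter.Tendsto E Filter.atTop (nhds 0) := by
    refine squeeze_zero hE_nonneg hE_geom ?_
    exact ((summable_pow_div hθ0 hθ1 (p := m+m+2) (by omega)).mul_left (u k)).tendsto_atTop_zero
  -- the sum at k equals 1
  have hzk : (∑' n, T n k) = 1 := by
    have hps : ∀ n, (∑ t ∈ Finset.range (n+1), T t k) = (u k - E n) / u k := by
      intro n
      have h := hE_id n
      field_simp
      linear_combination h
    have h2 : Filter.Tendsto (fun nn : ℕ => ∑ t ∈ Finset.range (nn+1), T t k)
        Filter.atTop (nhds (∑' n, T n k)) := by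
      have h3 := (hTsum k).hasSum.tendsto_sum_nat
      exact h3.comp (Filter.tendsto_add_atTop_nat 1)
    have h4 : Filter.Tendsto (fun n : ℕ => (u k - E n) / u k) Filter.atTop (nhds 1) := by
      have h5 := (tendsto_const_nhds (x := u k) (f := Filter.atTop (α := ℕ))).sub hE_tendsto
      have h6 := h5.div_const (u k)
      simp only [sub_zero] at h6
      rw [div_self (ne_of_gt huk)] at h6
      exact h6
    rw [funext hps] at h2
    exact tendsto_nhds_unique h2 h4
  -- the four claims
  have hyi : ∀ i, y i = (if i = k then 1 else 0) + (if i = k then 0 else ∑' n, T n i) := by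
    intro i
    rw [hy i]
    congr 1
    by_cases hi : i = k
    · simp [hi]
    · rw [if_neg hi]
      exact tsum_congr fun n => by rw [if_neg hi, pathSum_eq_Qm]
  refine ⟨?_, ?_, ?_, ?_⟩
  · -- summability
    intro i
    by_cases hi : i = k
    · simpa [hi] using summable_zero
    · have he : (fun n : ℕ => if i = k then (0:ℝ) else lam⁻¹ ^ (n+1) * pathSumAvoiding A k n i)
          = fun n => T n i := by
        funext n
        rw [if_neg hi, pathSum_eq_Qm]
      rw [he]
      exact hTsum i
  · -- nonnegativity
    intro i
    rw [hy i]
    refine add_nonneg ?_ (tsum_nonneg fun n => ?_)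
    · by_cases hi : i = k <;> simp [hi]
    · by_cases hi : i = k
      · simp [hi]
      · rw [if_neg hi, pathSum_eq_Qm]
        exact mul_nonneg (pow_nonneg hinv_nonneg _) (Qm_nonneg hA_nonneg _ _ _)
  · -- y k = 1
    rw [hy k]
    simp
  · -- eigenvector equation
    intro j
    have hmain : ∑ i, y i * A i j = lam * ∑' n, T n j := by
      calc ∑ i, y i * A i j
          = ∑ i, ((if i = k then 1 else 0) * A i j
              + (if i = k then 0 else (∑' n, T n i)) * A i j) := by
            refine Finset.sum_congr rfl fun i _ => ?_
            rw [hyi i]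
            ring
        _ = A k j + ∑ i, (if i = k then 0 else (∑' n, T n i) * A i j) := by
            rw [Finset.sum_add_distrib]
            congr 1
            · simp [ite_mul, Finset.sum_ite_eq']
            · refine Finset.sum_congr rfl fun i _ => ?_
              by_cases hi : i = k <;> simp [hi]
        _ = A k j + ∑' n, ∑ i, (if i = k then 0 else T n i * A i j) := by
            congr 1
            have hterm : ∀ i, (if i = k then (0:ℝ) else (∑' n, T n i) * A i j)
                = ∑' n, (if i = k then (0:ℝ) else T n i * A i j) := by
              intro i
              by_cases hi : i = k
              · simp [hi]
              · rw [if_neg hi, ← tsum_mul_right]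
                exact tsum_congr fun n => by rw [if_neg hi]
            rw [Finset.sum_congr rfl fun i _ => hterm i]
            refine (Summable.tsum_finsetSum fun i _ => ?_).symm
            by_cases hi : i = k
            · simpa [hi] using summable_zero
            · have he : (fun n : ℕ => if i = k then (0:ℝ) else T n i * A i j)
                  = fun n => T n i * A i j := by
                funext n; rw [if_neg hi]
              rw [he]
              exact (hTsum i).mul_right (A i j)
        _ = A k j + ∑' n, (lam * T (n+1) j) := by
            congr 1
            refine tsum_congr fun n => ?_
            have hrhs : T (n+1) j
                = lam⁻¹ ^ (n+2) * ∑ i, (if i = k then 0 else Qm A k n k i * A i j) := rfl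
            have e : lam * lam⁻¹ ^ (n+2) = lam⁻¹ ^ (n+1) := by
              rw [pow_succ']
              rw [← mul_assoc, mul_inv_cancel₀ hlam_ne, one_mul]
            rw [hrhs, ← mul_assoc, e, Finset.mul_sum]
            refine Finset.sum_congr rfl fun i _ => ?_
            by_cases hi : i = k
            · simp [hi]
            · rw [if_neg hi, if_neg hi]
              show (lam⁻¹ ^ (n+1) * Qm A k n k i) * A i j
                  = lam⁻¹ ^ (n+1) * (Qm A k n k i * A i j)
              ring
        _ = A k j + lam * ((∑' n, T n j) - T 0 j) := by
            rw [tsum_mul_left]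
            congr 2
            have h := Summable.tsum_eq_zero_add (hTsum j)
            linarith
        _ = lam * ∑' n, T n j := by
            have hT0 : lam * T 0 j = A k j := by
              show lam * (lam⁻¹ ^ (0+1) * Qm A k 0 k j) = A k j
              rw [pow_one, ← mul_assoc, mul_inv_cancel₀ hlam_ne, one_mul]
              rfl
            rw [mul_sub, hT0]
            ring
    rw [hmain]
    by_cases hj : j = k
    · rw [hj, hzk, hy k]
      simp
    · rw [hyi j, if_neg hj, if_neg hj, zero_add]
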